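/- arXiv:1307.6876 — 2 statements merged into one kernel-verified Lean document; each statement's English description precedes it below -/
import Mathlib

section
/- There exists a sequence (v_j)_{j≥1} of real numbers with 0 < v_j ≤ 1 for all j ≥ 1 and v_j = Σ_{m≥1} s(j,m) v_m for every j ≥ 1, if and only if Π_{j=1}^∞ p_j > 0. (This is the classical criterion characterizing transience of the stochastic adding machine Markov chain with transition probabilities s(n,m): the chain is null recurrent iff Π_{j=1}^∞ p_j = 0 and transient otherwise.) -/
open Filter Finset
open scoped ENNReal Topology ZeroAtInfty

noncomputable section

namespace AMFC

/-- `q d j = d 0 * d 1 * ... * d j`. -/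
def q (d : ℕ → ℕ) (j : ℕ) : ℕ := ∏ i ∈ Finset.range (j + 1), d i

/-- For `j ≥ 1`, `digit d n j = ⌊n / q_{j-1}⌋ mod d_j` is the `j`-th digit of `n`
in the Cantor system of numeration. -/
def digit (d : ℕ → ℕ) (n j : ℕ) : ℕ := (n / q d (j - 1)) % d j

/-- The counter `ζ_n = min { j ≥ 1 : a_j(n) ≠ d_j - 1 }`. -/
def zeta (d : ℕ → ℕ) (n : ℕ) : ℕ := sInf {j | 1 ≤ j ∧ digit d n j ≠ d j - 1}

open scoped Classical in
/-- The transition probabilities of the stochastic adding machine. -/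
def s (d : ℕ → ℕ) (p : ℕ → ℝ) (n m : ℕ) : ℝ :=
  if m = n + 1 then ∏ j ∈ Finset.Icc 1 (zeta d n), p j
  else if m = n then 1 - p 1
  else if h : ∃ r, 1 ≤ r ∧ r + 1 ≤ zeta d n ∧
      n = m + ∑ j ∈ Finset.Icc 1 r, (d j - 1) * q d (j - 1)
    then (1 - p (h.choose + 1)) * ∏ j ∈ Finset.Icc 1 h.choose, p j
  else 0

/-- `f j (z) = ((z - (1 - p j)) / p j) ^ (d j)`. -/
def f (d : ℕ → ℕ) (p : ℕ → ℝ) (j : ℕ) (z : ℂ) : ℂ :=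
  ((z - (1 - (p j : ℂ))) / (p j : ℂ)) ^ d j

/-- `ftil j = f j ∘ ... ∘ f 1`, with `ftil 0 = id`. -/
def ftil (d : ℕ → ℕ) (p : ℕ → ℝ) : ℕ → ℂ → ℂ
  | 0 => id
  | j + 1 => f d p (j + 1) ∘ ftil d p j

/-- The fibered filled Julia set `E = {z : limsup_j |ftil j z| < ∞}`. -/
def E (d : ℕ → ℕ) (p : ℕ → ℝ) : Set ℂ :=
  {z | Filter.limsup (fun j => (‖ftil d p j z‖₊ : ℝ≥0∞)) Filter.atTop < ⊤}

/-- `ι_λ(r) = (ftil (r-1) λ - (1 - p r)) / p r` for `r ≥ 1`. -/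
def iota (d : ℕ → ℕ) (p : ℕ → ℝ) (lam : ℂ) (r : ℕ) : ℂ :=
  (ftil d p (r - 1) lam - (1 - (p r : ℂ))) / (p r : ℂ)

/-- `v_λ(n) = ∏_{r ≥ 1} ι_λ(r) ^ a_r(n)`, a finite product. -/
def vlam (d : ℕ → ℕ) (p : ℕ → ℝ) (lam : ℂ) (n : ℕ) : ℂ :=
  ∏ᶠ r : ℕ, iota d p lam (r + 1) ^ digit d n (r + 1)

/-- The point spectrum of a continuous linear operator. -/
def pointSpectrum {M : Type*} [NormedAddCommGroup M] [NormedSpace ℂ M]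
    (T : M →L[ℂ] M) : Set ℂ :=
  {lam | ∃ v, v ≠ 0 ∧ T v = lam • v}

/-- The residual spectrum: `T - λI` is injective but its range is not dense. -/
def residualSpectrum {M : Type*} [NormedAddCommGroup M] [NormedSpace ℂ M]
    (T : M →L[ℂ] M) : Set ℂ :=
  {lam | Function.Injective ⇑(T - lam • (1 : M →L[ℂ] M)) ∧
    ¬ DenseRange ⇑(T - lam • (1 : M →L[ℂ] M))}

/-- The continuous spectrum: `T - λI` is injective with dense range, but not surjective. -/
def continuousSpectrum {M : Type*} [NormedAddCommGroup M] [NormedSpace ℂ M]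
    (T : M →L[ℂ] M) : Set ℂ :=
  {lam | Function.Injective ⇑(T - lam • (1 : M →L[ℂ] M)) ∧
    DenseRange ⇑(T - lam • (1 : M →L[ℂ] M)) ∧
    Set.range ⇑(T - lam • (1 : M →L[ℂ] M)) ≠ Set.univ}

section Aux

variable {d : ℕ → ℕ} {p : ℕ → ℝ}

lemma q_zeroth (hd0 : d 0 = 1) : q d 0 = 1 := by simp [q, hd0]

lemma q_succ_eq (j : ℕ) : q d (j + 1) = q d j * d (j + 1) := Finset.prod_range_succ d (j + 1)

lemma d_pos (hd0 : d 0 = 1) (hd : ∀ j, 1 ≤ j → 2 ≤ d j) : ∀ i, 0 < d i := by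
  intro i
  cases i with
  | zero => omega
  | succ n => have := hd (n + 1) (by omega); omega

lemma q_pos (hd0 : d 0 = 1) (hd : ∀ j, 1 ≤ j → 2 ≤ d j) (j : ℕ) : 0 < q d j :=
  Finset.prod_pos fun i _ => d_pos hd0 hd i

lemma q_lt_succ (hd0 : d 0 = 1) (hd : ∀ j, 1 ≤ j → 2 ≤ d j) (j : ℕ) : q d j < q d (j + 1) := by
  have h1 := q_succ_eq (d := d) j
  have h2 : 2 ≤ d (j + 1) := hd _ (by omega)
  have h3 : q d j * 2 ≤ q d j * d (j + 1) := Nat.mul_le_mul_left _ h2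
  have h4 := q_pos hd0 hd j
  omega

lemma q_strictMono (hd0 : d 0 = 1) (hd : ∀ j, 1 ≤ j → 2 ≤ d j) : StrictMono (q d) :=
  strictMono_nat_of_lt_succ (q_lt_succ hd0 hd)

lemma q_mono (hd0 : d 0 = 1) (hd : ∀ j, 1 ≤ j → 2 ≤ d j) {a b : ℕ} (h : a ≤ b) :
    q d a ≤ q d b := (q_strictMono hd0 hd).monotone h

lemma q_dvd {a b : ℕ} (h : a ≤ b) : q d a ∣ q d b :=
  Finset.prod_dvd_prod_of_subset _ _ d (Finset.range_subset_range.mpr (by omega))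

lemma q_ge_two (hd0 : d 0 = 1) (hd : ∀ j, 1 ≤ j → 2 ≤ d j) {r : ℕ} (hr : 1 ≤ r) :
    2 ≤ q d r := by
  have h1 : q d 1 = d 1 := by simp [q, Finset.prod_range_succ, hd0]
  have h2 := q_mono hd0 hd hr
  have := hd 1 le_rfl
  omega

lemma lt_q (hd0 : d 0 = 1) (hd : ∀ j, 1 ≤ j → 2 ≤ d j) : ∀ n : ℕ, n < q d (n + 1)
  | 0 => q_pos hd0 hd 1
  | (n + 1) => by
      show n + 1 < q d (n + 2)
      have ih := lt_q hd0 hd n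
      have h : q d (n + 2) = q d (n + 1) * d (n + 2) := q_succ_eq (n + 1)
      have h2 : 2 ≤ d (n + 2) := hd _ (by omega)
      have h3 : q d (n + 1) * 2 ≤ q d (n + 1) * d (n + 2) := Nat.mul_le_mul_left _ h2
      omega

lemma sum_tele (hd0 : d 0 = 1) (hd : ∀ j, 1 ≤ j → 2 ≤ d j) :
    ∀ r : ℕ, ∑ j ∈ Finset.Icc 1 r, (d j - 1) * q d (j - 1) = q d r - 1
  | 0 => by simp [q_zeroth hd0]
  | (r + 1) => by
      rw [Finset.sum_Icc_succ_top (by omega), sum_tele hd0 hd r]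
      have h1 := q_succ_eq (d := d) r
      have h2 : 1 ≤ q d r := q_pos hd0 hd r
      have h3 : 2 ≤ d (r + 1) := hd _ (by omega)
      have h4 : (d (r + 1) - 1) * q d r = q d r * d (r + 1) - q d r := by
        rw [Nat.sub_one_mul, Nat.mul_comm]
      have h5 : q d r ≤ q d r * d (r + 1) := Nat.le_mul_of_pos_right _ (by omega)
      simp only [Nat.add_sub_cancel]
      omega

lemma digit_eq_mod (n : ℕ) {i : ℕ} (hi : 1 ≤ i) : digit d n i = n % q d i / q d (i - 1) := by
  obtain ⟨k, rfl⟩ : ∃ k, i = k + 1 := ⟨i - 1, by omega⟩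
  show (n / q d (k + 1 - 1)) % d (k + 1) = n % q d (k + 1) / q d (k + 1 - 1)
  simp only [Nat.add_sub_cancel]
  rw [q_succ_eq, Nat.mod_mul_right_div_self]

lemma zeta_mem (hd0 : d 0 = 1) (hd : ∀ j, 1 ≤ j → 2 ≤ d j) (n : ℕ) :
    1 ≤ zeta d n ∧ digit d n (zeta d n) ≠ d (zeta d n) - 1 := by
  have hne : {j | 1 ≤ j ∧ digit d n j ≠ d j - 1}.Nonempty := by
    refine ⟨n + 2, by omega, ?_⟩
    have h1 : n < q d (n + 1) := lt_q hd0 hd n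
    have h0 : digit d n (n + 2) = 0 := by
      have h3 : n / q d (n + 1) = 0 := Nat.div_eq_of_lt h1
      simp [digit, h3]
    have h2 := hd (n + 2) (by omega)
    omega
  exact Nat.sInf_mem hne

lemma digit_full (n : ℕ) {i : ℕ} (h1 : 1 ≤ i) (h2 : i < zeta d n) : digit d n i = d i - 1 := by
  by_contra h
  have : zeta d n ≤ i := Nat.sInf_le ⟨h1, h⟩
  omega

lemma mod_full (hd0 : d 0 = 1) (hd : ∀ j, 1 ≤ j → 2 ≤ d j) (n : ℕ) :
    ∀ r : ℕ, r < zeta d n → n % q d r = q d r - 1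
  | 0, _ => by simp [q_zeroth hd0, Nat.mod_one]
  | (r + 1), h => by
      have ih := mod_full hd0 hd n r (by omega)
      have hd1 : digit d n (r + 1) = d (r + 1) - 1 := digit_full n (by omega) h
      rw [digit_eq_mod n (by omega)] at hd1
      simp only [Nat.add_sub_cancel] at hd1
      have hmm : n % q d (r + 1) % q d r = n % q d r := Nat.mod_mod_of_dvd n (q_dvd (by omega))
      have hdm := Nat.div_add_mod (n % q d (r + 1)) (q d r)
      rw [hd1, hmm, ih] at hdm
      rw [← hdm]
      have hq : q d (r + 1) = q d r * d (r + 1) := q_succ_eq r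
      have h2 : 2 ≤ d (r + 1) := hd _ (by omega)
      have hp1 : 0 < q d r := q_pos hd0 hd r
      have hmul : q d r * (d (r + 1) - 1) = q d r * d (r + 1) - q d r :=
        Nat.mul_sub_one _ _
      have h5 : q d r ≤ q d r * d (r + 1) := Nat.le_mul_of_pos_right _ (by omega)
      omega
  termination_by r => r

def Kfun (d : ℕ → ℕ) (n : ℕ) : ℕ := sInf {r | n < q d r}

lemma Kfun_lt (hd0 : d 0 = 1) (hd : ∀ j, 1 ≤ j → 2 ≤ d j) (n : ℕ) : n < q d (Kfun d n) :=
  Nat.sInf_mem (⟨n + 1, lt_q hd0 hd n⟩ : {r | n < q d r}.Nonempty)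

lemma Kfun_eq (hd0 : d 0 = 1) (hd : ∀ j, 1 ≤ j → 2 ≤ d j) {n t : ℕ}
    (h1 : n < q d t) (h2 : t = 0 ∨ q d (t - 1) ≤ n) : Kfun d n = t := by
  have hle : Kfun d n ≤ t := Nat.sInf_le h1
  rcases h2 with rfl | h2
  · omega
  · by_contra hne
    have hlt : Kfun d n ≤ t - 1 := by omega
    have h3 : q d (Kfun d n) ≤ q d (t - 1) := q_mono hd0 hd hlt
    have h4 := Kfun_lt hd0 hd n
    omega

def Pp (p : ℕ → ℝ) (k : ℕ) : ℝ := ∏ j ∈ Finset.Icc 1 k, p j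

lemma Pp_pos (hp : ∀ j, 1 ≤ j → p j ∈ Set.Ioc (0 : ℝ) 1) (k : ℕ) : 0 < Pp p k :=
  Finset.prod_pos fun j hj => (hp j (Finset.mem_Icc.mp hj).1).1

lemma Pp_succ (k : ℕ) : Pp p (k + 1) = Pp p k * p (k + 1) :=
  Finset.prod_Icc_succ_top (by omega) p

lemma Pp_one : Pp p 1 = p 1 := by simp [Pp]

lemma Pp_zero : Pp p 0 = 1 := by simp [Pp]

lemma Pp_le_one (hp : ∀ j, 1 ≤ j → p j ∈ Set.Ioc (0 : ℝ) 1) (k : ℕ) : Pp p k ≤ 1 :=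
  Finset.prod_le_one (fun j hj => (hp j (Finset.mem_Icc.mp hj).1).1.le)
    (fun j hj => (hp j (Finset.mem_Icc.mp hj).1).2)

lemma Pp_anti (hp : ∀ j, 1 ≤ j → p j ∈ Set.Ioc (0 : ℝ) 1) : Antitone (Pp p) :=
  antitone_nat_of_succ_le fun k => by
    rw [Pp_succ]
    exact mul_le_of_le_one_right (Pp_pos hp k).le (hp (k + 1) (by omega)).2

lemma coeff_tele : ∀ z : ℕ, ∑ r ∈ Finset.Icc 1 z, (1 - p (r + 1)) * Pp p r = p 1 - Pp p (z + 1)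
  | 0 => by simp [Pp_one]
  | (z + 1) => by
      rw [Finset.sum_Icc_succ_top (by omega), coeff_tele z, Pp_succ (z + 1), Pp_succ z]
      ring

lemma pred_mod {a b : ℕ} (ha : 0 < a) (hab : a ∣ b) (hb : 0 < b) : (b - 1) % a = a - 1 := by
  obtain ⟨k, rfl⟩ := hab
  have hk : k ≠ 0 := by rintro rfl; simp at hb
  have h1 : a * (k - 1) + a = a * k := by rw [← Nat.mul_succ]; congr 1; omega
  have h2 : a * k - 1 = a * (k - 1) + (a - 1) := by omega
  rw [h2, Nat.mul_add_mod, Nat.mod_eq_of_lt (by omega)]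

lemma pred_div {a b : ℕ} (ha : 0 < a) (hb : 0 < b) : (a * b - 1) / a = b - 1 := by
  have h1 : a * (b - 1) + a = a * b := by rw [← Nat.mul_succ]; congr 1; omega
  have h2 : a * b - 1 = a * (b - 1) + (a - 1) := by omega
  rw [h2, Nat.mul_add_div ha, Nat.div_eq_of_lt (by omega), Nat.add_zero]

lemma rowcalc (hd0 : d 0 = 1) (hd : ∀ j, 1 ≤ j → 2 ≤ d j)
    (hp : ∀ j, 1 ≤ j → p j ∈ Set.Ioc (0 : ℝ) 1) (c : ℝ) {j : ℕ} (hj : 1 ≤ j) :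
    (1 - p 1) * (c / Pp p (Kfun d j))
      + Pp p (zeta d j) * (c / Pp p (Kfun d (j + 1)))
      + ∑ r ∈ (Finset.Icc 1 (zeta d j - 1)).filter (fun r => q d r ≤ j),
          (1 - p (r + 1)) * Pp p r * (c / Pp p (Kfun d (j - (q d r - 1))))
      = c / Pp p (Kfun d j) := by
  obtain ⟨hζ1, hζne⟩ := zeta_mem hd0 hd j
  set ζ := zeta d j with hζdef
  have hζeq : ζ - 1 + 1 = ζ := by omega
  by_cases hA : q d (ζ - 1) ≤ j
  · -- Case A
    set t := Kfun d j with ht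
    have hjt : j < q d t := Kfun_lt hd0 hd j
    have hq0 : q d 0 = 1 := q_zeroth hd0
    have ht1 : 1 ≤ t := by
      by_contra h
      have h0 : t = 0 := by omega
      rw [h0] at hjt
      omega
    have htl : q d (t - 1) ≤ j := by
      by_contra h
      have h1 : Kfun d j ≤ t - 1 := Nat.sInf_le (show j < q d (t - 1) by omega)
      omega
    have hζt : ζ ≤ t := by
      have h1 : ζ - 1 < t := by
        by_contra h
        have h2 : q d t ≤ q d (ζ - 1) := q_mono hd0 hd (by omega)
        omega
      omega
    have hqζ : 0 < q d ζ := q_pos hd0 hd ζ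
    have hqζ1 : 0 < q d (ζ - 1) := q_pos hd0 hd (ζ - 1)
    have hA1 : Kfun d (j + 1) = t := by
      apply Kfun_eq hd0 hd ?_ (Or.inr (by omega))
      rcases Nat.lt_or_ge (j + 1) (q d t) with h | h
      · exact h
      · exfalso
        have hje : j = q d t - 1 := by omega
        have hmod : j % q d ζ = q d ζ - 1 := by
          rw [hje]
          exact pred_mod hqζ (q_dvd hζt) (q_pos hd0 hd t)
        have hqe : q d ζ = q d (ζ - 1) * d ζ := by
          have := q_succ_eq (d := d) (ζ - 1)
          rw [hζeq] at this
          exact this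
        have : digit d j ζ = d ζ - 1 := by
          rw [digit_eq_mod j hζ1, hmod, hqe, pred_div hqζ1 (d_pos hd0 hd ζ)]
        exact hζne this
    have hKr : ∀ r ∈ Finset.Icc 1 (ζ - 1), Kfun d (j - (q d r - 1)) = t := by
      intro r hr
      obtain ⟨hr1, hr2⟩ := Finset.mem_Icc.mp hr
      have hqr : 0 < q d r := q_pos hd0 hd r
      have hmod : j % q d r = q d r - 1 := mod_full hd0 hd j r (by omega)
      have hda := Nat.div_add_mod j (q d r)
      rw [hmod] at hda
      have hmeq : j - (q d r - 1) = q d r * (j / q d r) := by omega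
      have hdvd : q d r ∣ q d (t - 1) := q_dvd (by omega)
      have hlow : q d (t - 1) ≤ q d r * (j / q d r) := by
        calc q d (t - 1) = q d r * (q d (t - 1) / q d r) := (Nat.mul_div_cancel' hdvd).symm
          _ ≤ q d r * (j / q d r) := Nat.mul_le_mul_left _ (Nat.div_le_div_right htl)
      apply Kfun_eq hd0 hd (by omega) (Or.inr (by omega))
    have hfil : (Finset.Icc 1 (ζ - 1)).filter (fun r => q d r ≤ j) = Finset.Icc 1 (ζ - 1) :=
      Finset.filter_true_of_mem fun r hr =>
        le_trans (q_mono hd0 hd (Finset.mem_Icc.mp hr).2) hA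
    rw [hfil, hA1]
    rw [Finset.sum_congr rfl (fun r hr => by rw [hKr r hr])]
    rw [← Finset.sum_mul, coeff_tele (ζ - 1), hζeq]
    ring
  · -- Case B
    push_neg at hA
    have hmod : j % q d (ζ - 1) = q d (ζ - 1) - 1 := mod_full hd0 hd j (ζ - 1) (by omega)
    rw [Nat.mod_eq_of_lt hA] at hmod
    have hq0 : q d 0 = 1 := q_zeroth hd0
    have hζ2 : 2 ≤ ζ := by
      by_contra h
      have : ζ = 1 := by omega
      rw [this] at hA
      simp only [Nat.sub_self] at hA
      omega
    have hqlt : q d (ζ - 2) < q d (ζ - 1) := by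
      have := q_strictMono hd0 hd (show ζ - 2 < ζ - 1 by omega)
      exact this
    have hKj : Kfun d j = ζ - 1 := by
      apply Kfun_eq hd0 hd hA (Or.inr ?_)
      have : ζ - 1 - 1 = ζ - 2 := by omega
      rw [this]
      omega
    have hqζ1 : 0 < q d (ζ - 1) := q_pos hd0 hd (ζ - 1)
    have hK1 : Kfun d (j + 1) = ζ := by
      apply Kfun_eq hd0 hd ?_ (Or.inr (by omega))
      have : q d (ζ - 1) < q d ζ := q_strictMono hd0 hd (by omega)
      omega
    have hfil : (Finset.Icc 1 (ζ - 1)).filter (fun r => q d r ≤ j) = Finset.Icc 1 (ζ - 2) := by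
      ext r
      simp only [Finset.mem_filter, Finset.mem_Icc]
      constructor
      · rintro ⟨⟨h1, h2⟩, h3⟩
        refine ⟨h1, ?_⟩
        have : q d r < q d (ζ - 1) := by omega
        have := (q_strictMono hd0 hd).lt_iff_lt.mp this
        omega
      · rintro ⟨h1, h2⟩
        have h3 : q d r < q d (ζ - 1) :=
          lt_of_le_of_lt (q_mono hd0 hd (show r ≤ ζ - 2 by omega)) hqlt
        exact ⟨⟨h1, by omega⟩, by omega⟩
    have hKr : ∀ r ∈ Finset.Icc 1 (ζ - 2), Kfun d (j - (q d r - 1)) = ζ - 1 := by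
      intro r hr
      obtain ⟨hr1, hr2⟩ := Finset.mem_Icc.mp hr
      have hqr : 0 < q d r := q_pos hd0 hd r
      have hqr2 : q d r ≤ q d (ζ - 2) := q_mono hd0 hd hr2
      have hqe : q d (ζ - 1) = q d (ζ - 2) * d (ζ - 1) := by
        have := q_succ_eq (d := d) (ζ - 2)
        have he : ζ - 2 + 1 = ζ - 1 := by omega
        rw [he] at this
        exact this
      have hge2 : 2 ≤ d (ζ - 1) := hd _ (by omega)
      have hmul : q d (ζ - 2) * 2 ≤ q d (ζ - 2) * d (ζ - 1) :=
        Nat.mul_le_mul_left _ hge2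
      have hq2pos : 0 < q d (ζ - 2) := q_pos hd0 hd (ζ - 2)
      apply Kfun_eq hd0 hd (by omega) (Or.inr ?_)
      have : ζ - 1 - 1 = ζ - 2 := by omega
      rw [this]
      omega
    rw [hfil, hKj, hK1]
    rw [Finset.sum_congr rfl (fun r hr => by rw [hKr r hr])]
    rw [← Finset.sum_mul, coeff_tele (ζ - 2), show ζ - 2 + 1 = ζ - 1 by omega]
    have hPζ : Pp p ζ ≠ 0 := (Pp_pos hp ζ).ne'
    have hPζ1 : Pp p (ζ - 1) ≠ 0 := (Pp_pos hp (ζ - 1)).ne'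
    field_simp
    ring

lemma s_eval_succ (n : ℕ) : s d p n (n + 1) = Pp p (zeta d n) := by
  unfold s
  rw [if_pos rfl]
  rfl

lemma s_eval_self (n : ℕ) : s d p n n = 1 - p 1 := by
  unfold s
  rw [if_neg (by omega), if_pos rfl]

lemma s_eval_zero (hd0 : d 0 = 1) (hd : ∀ j, 1 ≤ j → 2 ≤ d j) {n m : ℕ}
    (hm1 : m ≠ n + 1) (hm2 : m ≠ n)
    (hm3 : ∀ r, 1 ≤ r → r + 1 ≤ zeta d n → n ≠ m + (q d r - 1)) :
    s d p n m = 0 := by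
  unfold s
  rw [if_neg hm1, if_neg hm2, dif_neg]
  rintro ⟨r, h1, h2, h3⟩
  rw [sum_tele hd0 hd] at h3
  exact hm3 r h1 h2 h3

lemma s_eval_back (hd0 : d 0 = 1) (hd : ∀ j, 1 ≤ j → 2 ≤ d j) {n r : ℕ}
    (hr1 : 1 ≤ r) (hrz : r + 1 ≤ zeta d n) :
    s d p n (n - (q d r - 1)) = (1 - p (r + 1)) * Pp p r := by
  have hmod : n % q d r = q d r - 1 := mod_full hd0 hd n r (by omega)
  have hq2 : 2 ≤ q d r := q_ge_two hd0 hd hr1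
  have hng : q d r - 1 ≤ n := hmod ▸ Nat.mod_le n (q d r)
  set m := n - (q d r - 1) with hm
  have hnm : n = m + (q d r - 1) := by omega
  have hsum : n = m + ∑ j ∈ Finset.Icc 1 r, (d j - 1) * q d (j - 1) := by
    rw [sum_tele hd0 hd r]; omega
  have hex : ∃ r', 1 ≤ r' ∧ r' + 1 ≤ zeta d n ∧
      n = m + ∑ j ∈ Finset.Icc 1 r', (d j - 1) * q d (j - 1) := ⟨r, hr1, hrz, hsum⟩
  unfold s
  rw [if_neg (by omega), if_neg (by omega), dif_pos hex]
  obtain ⟨h1, h2, h3⟩ := hex.choose_spec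
  rw [sum_tele hd0 hd] at h3
  have hq1 : 1 ≤ q d hex.choose := q_pos hd0 hd _
  have hqq : q d hex.choose = q d r := by omega
  have hce : hex.choose = r := (q_strictMono hd0 hd).injective hqq
  rw [hce]
  rfl

lemma rowsum (hd0 : d 0 = 1) (hd : ∀ j, 1 ≤ j → 2 ≤ d j) (v : ℕ → ℝ) {n : ℕ} (hn : 1 ≤ n) :
    ∑' m : ℕ, s d p n (m + 1) * v (m + 1)
      = (1 - p 1) * v n + Pp p (zeta d n) * v (n + 1)
        + ∑ r ∈ (Finset.Icc 1 (zeta d n - 1)).filter (fun r => q d r ≤ n),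
            (1 - p (r + 1)) * Pp p r * v (n - (q d r - 1)) := by
  obtain ⟨hζ1, _⟩ := zeta_mem hd0 hd n
  have htsum : ∑' m : ℕ, s d p n (m + 1) * v (m + 1)
      = ∑ m ∈ Finset.range (n + 1), s d p n (m + 1) * v (m + 1) := by
    apply tsum_eq_sum
    intro m hm
    have hm' : n + 1 ≤ m := by simpa using hm
    have hz : s d p n (m + 1) = 0 := by
      apply s_eval_zero hd0 hd (by omega) (by omega)
      intro r h1 h2 h3
      have hq1 : 1 ≤ q d r := q_pos hd0 hd r
      omega
    rw [hz, zero_mul]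
  rw [htsum, Finset.sum_range_succ]
  have hpeel : ∑ m ∈ Finset.range n, s d p n (m + 1) * v (m + 1)
      = ∑ m ∈ Finset.range (n - 1), s d p n (m + 1) * v (m + 1) + s d p n n * v n := by
    have h1 : n = (n - 1) + 1 := by omega
    rw [h1, Finset.sum_range_succ]
    rw [← h1]
  rw [hpeel, s_eval_succ, s_eval_self]
  have hback : ∑ m ∈ Finset.range (n - 1), s d p n (m + 1) * v (m + 1)
      = ∑ r ∈ (Finset.Icc 1 (zeta d n - 1)).filter (fun r => q d r ≤ n),
          (1 - p (r + 1)) * Pp p r * v (n - (q d r - 1)) := by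
    set R := (Finset.Icc 1 (zeta d n - 1)).filter (fun r => q d r ≤ n) with hR
    have hmemR : ∀ r, r ∈ R ↔ (1 ≤ r ∧ r ≤ zeta d n - 1 ∧ q d r ≤ n) := by
      intro r
      simp [hR, Finset.mem_filter, Finset.mem_Icc, and_assoc]
    have hsub : R.image (fun r => n - q d r) ⊆ Finset.range (n - 1) := by
      intro m hm
      obtain ⟨r, hrR, rfl⟩ := Finset.mem_image.mp hm
      obtain ⟨hr1, hr2, hr3⟩ := (hmemR r).mp hrR
      have hq2 : 2 ≤ q d r := q_ge_two hd0 hd hr1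
      exact Finset.mem_range.mpr (by omega)
    have hzero : ∀ m ∈ Finset.range (n - 1), m ∉ R.image (fun r => n - q d r) →
        s d p n (m + 1) * v (m + 1) = 0 := by
      intro m hm hmim
      have hmlt : m < n - 1 := Finset.mem_range.mp hm
      have hz : s d p n (m + 1) = 0 := by
        apply s_eval_zero hd0 hd (by omega) (by omega)
        intro r h1 h2 h3
        have hq1 : 1 ≤ q d r := q_pos hd0 hd r
        apply hmim
        refine Finset.mem_image.mpr ⟨r, (hmemR r).mpr ⟨h1, by omega, by omega⟩, by omega⟩
      rw [hz, zero_mul]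
    rw [← Finset.sum_subset hsub hzero]
    rw [Finset.sum_image ?inj]
    case inj =>
      intro r hr r' hr' hEq
      obtain ⟨_, _, h3⟩ := (hmemR r).mp hr
      obtain ⟨_, _, h3'⟩ := (hmemR r').mp hr'
      have hq1 : 1 ≤ q d r := q_pos hd0 hd r
      have hq1' : 1 ≤ q d r' := q_pos hd0 hd r'
      exact (q_strictMono hd0 hd).injective (by have hEq' : n - q d r = n - q d r' := hEq; omega)
    apply Finset.sum_congr rfl
    intro r hrR
    obtain ⟨hr1, hr2, hr3⟩ := (hmemR r).mp hrR
    have hq1 : 1 ≤ q d r := q_pos hd0 hd r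
    have hcol : n - q d r + 1 = n - (q d r - 1) := by omega
    rw [hcol, s_eval_back hd0 hd hr1 (by omega)]
  rw [hback]
  ring

lemma sum_ext (hd0 : d 0 = 1) (hd : ∀ j, 1 ≤ j → 2 ≤ d j) (w : ℕ → ℝ) (hw0 : w 0 = 0)
    {j : ℕ} (hj : 1 ≤ j) :
    ∑ r ∈ (Finset.Icc 1 (zeta d j - 1)).filter (fun r => q d r ≤ j),
        (1 - p (r + 1)) * Pp p r * w (j - (q d r - 1))
      = ∑ r ∈ Finset.Icc 1 (zeta d j - 1),
          (1 - p (r + 1)) * Pp p r * w (j - (q d r - 1)) := by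
  apply Finset.sum_filter_of_ne
  intro r hr hne
  by_contra hqj
  push_neg at hqj
  obtain ⟨hr1, hr2⟩ := Finset.mem_Icc.mp hr
  obtain ⟨hζ1, _⟩ := zeta_mem hd0 hd j
  have hmod : j % q d r = q d r - 1 := mod_full hd0 hd j r (by omega)
  rw [Nat.mod_eq_of_lt hqj] at hmod
  rw [show j - (q d r - 1) = 0 by omega, hw0, mul_zero] at hne
  exact hne rfl

lemma key_ineq (hd0 : d 0 = 1) (hd : ∀ j, 1 ≤ j → 2 ≤ d j)
    (hp : ∀ j, 1 ≤ j → p j ∈ Set.Ioc (0 : ℝ) 1) (v : ℕ → ℝ)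
    (hv1 : ∀ j, 1 ≤ j → 0 < v j ∧ v j ≤ 1)
    (hv2 : ∀ j, 1 ≤ j → v j = ∑' m : ℕ, s d p j (m + 1) * v (m + 1))
    {K : ℕ} (hK : 1 ≤ K) : p 1 * v 1 ≤ Pp p (K + 1) := by
  classical
  set N := q d K with hN
  have hN2 : 2 ≤ N := q_ge_two hd0 hd hK
  set V : ℕ → ℝ := fun n => if n = 0 then 0 else v n with hV
  set U : ℕ → ℝ := fun n => if n = 0 then 0 else Pp p (K + 1) / Pp p (Kfun d n) with hU
  set X : ℕ → ℝ := fun n => V n - U n with hX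
  have hV0 : V 0 = 0 := by simp [hV]
  have hU0 : U 0 = 0 := by simp [hU]
  have hX0 : X 0 = 0 := by simp [hX, hV0, hU0]
  have hVpos : ∀ m, 1 ≤ m → V m = v m := fun m hm => by simp [hV]; omega
  have hUpos : ∀ m, 1 ≤ m → U m = Pp p (K + 1) / Pp p (Kfun d m) := fun m hm => by
    simp only [hU]; rw [if_neg (by omega)]
  -- combined equation
  have hXeq : ∀ j, 1 ≤ j → p 1 * X j
      = Pp p (zeta d j) * X (j + 1)
        + ∑ r ∈ Finset.Icc 1 (zeta d j - 1),
            (1 - p (r + 1)) * Pp p r * X (j - (q d r - 1)) := by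
    intro j hj
    obtain ⟨hζ1, _⟩ := zeta_mem hd0 hd j
    -- V equation
    have hveq := hv2 j hj
    rw [rowsum hd0 hd v hj] at hveq
    have hVsum : ∑ r ∈ (Finset.Icc 1 (zeta d j - 1)).filter (fun r => q d r ≤ j),
        (1 - p (r + 1)) * Pp p r * v (j - (q d r - 1))
        = ∑ r ∈ Finset.Icc 1 (zeta d j - 1),
            (1 - p (r + 1)) * Pp p r * V (j - (q d r - 1)) := by
      rw [← sum_ext hd0 hd V hV0 hj]
      apply Finset.sum_congr rfl
      intro r hr
      obtain ⟨hrI, hrq⟩ := Finset.mem_filter.mp hr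
      have hq1 : 1 ≤ q d r := q_pos hd0 hd r
      rw [hVpos _ (by omega)]
    rw [hVsum] at hveq
    have hVeq : p 1 * V j = Pp p (zeta d j) * V (j + 1)
        + ∑ r ∈ Finset.Icc 1 (zeta d j - 1),
            (1 - p (r + 1)) * Pp p r * V (j - (q d r - 1)) := by
      rw [hVpos j hj, hVpos (j + 1) (by omega)]
      linarith [hveq]
    -- U equation
    have hueq := rowcalc hd0 hd hp (Pp p (K + 1)) hj
    have hUsum : ∑ r ∈ (Finset.Icc 1 (zeta d j - 1)).filter (fun r => q d r ≤ j),
        (1 - p (r + 1)) * Pp p r * (Pp p (K + 1) / Pp p (Kfun d (j - (q d r - 1))))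
        = ∑ r ∈ Finset.Icc 1 (zeta d j - 1),
            (1 - p (r + 1)) * Pp p r * U (j - (q d r - 1)) := by
      rw [← sum_ext hd0 hd U hU0 hj]
      apply Finset.sum_congr rfl
      intro r hr
      obtain ⟨hrI, hrq⟩ := Finset.mem_filter.mp hr
      have hq1 : 1 ≤ q d r := q_pos hd0 hd r
      rw [hUpos _ (by omega)]
    rw [hUsum] at hueq
    have hUeq : p 1 * U j = Pp p (zeta d j) * U (j + 1)
        + ∑ r ∈ Finset.Icc 1 (zeta d j - 1),
            (1 - p (r + 1)) * Pp p r * U (j - (q d r - 1)) := by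
      rw [hUpos j hj, hUpos (j + 1) (by omega)]
      linarith [hueq]
    have hsplit : ∑ r ∈ Finset.Icc 1 (zeta d j - 1),
        (1 - p (r + 1)) * Pp p r * X (j - (q d r - 1))
        = (∑ r ∈ Finset.Icc 1 (zeta d j - 1),
            (1 - p (r + 1)) * Pp p r * V (j - (q d r - 1)))
          - ∑ r ∈ Finset.Icc 1 (zeta d j - 1),
            (1 - p (r + 1)) * Pp p r * U (j - (q d r - 1)) := by
      rw [← Finset.sum_sub_distrib]
      apply Finset.sum_congr rfl
      intro r _
      simp only [hX]
      ring
    have hXj : X j = V j - U j := by simp [hX]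
    have hXj1 : X (j + 1) = V (j + 1) - U (j + 1) := by simp [hX]
    rw [hXj, hXj1, hsplit]
    have e1 : p 1 * (V j - U j) = p 1 * V j - p 1 * U j := by ring
    have e2 : Pp p (zeta d j) * (V (j + 1) - U (j + 1))
        = Pp p (zeta d j) * V (j + 1) - Pp p (zeta d j) * U (j + 1) := by ring
    rw [e1, e2]
    linarith [hVeq, hUeq]
  -- maximum principle
  have hmain : X 1 ≤ 0 := by
    by_contra hpos
    push_neg at hpos
    set F := Finset.range (N + 1) with hF
    have hFne : F.Nonempty := ⟨0, Finset.mem_range.mpr (by omega)⟩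
    obtain ⟨j0, hj0F, hj0max⟩ := Finset.exists_max_image F X hFne
    set A := F.filter (fun i => X j0 ≤ X i) with hA
    have hAne : A.Nonempty := ⟨j0, Finset.mem_filter.mpr ⟨hj0F, le_rfl⟩⟩
    set j := A.max' hAne with hjdef
    have hjA : j ∈ A := Finset.max'_mem A hAne
    have hjF : j ∈ F := (Finset.mem_filter.mp hjA).1
    have hjmax : ∀ i ∈ F, X i ≤ X j := fun i hi =>
      (hj0max i hi).trans (Finset.mem_filter.mp hjA).2
    have hjN : j ≤ N := by
      have := Finset.mem_range.mp hjF
      omega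
    have hXjpos : 0 < X j :=
      lt_of_lt_of_le hpos (hjmax 1 (Finset.mem_range.mpr (by omega)))
    have hj0' : j ≠ 0 := by
      intro h
      rw [h, hX0] at hXjpos
      exact lt_irrefl _ hXjpos
    have hXN : X N ≤ 0 := by
      have hKN : Kfun d N = K + 1 := by
        apply Kfun_eq hd0 hd
        · rw [hN]; exact q_lt_succ hd0 hd K
        · right; simp [hN]
      have hUN : U N = 1 := by
        rw [hUpos N (by omega), hKN, div_self (Pp_pos hp (K + 1)).ne']
      have hvN := (hv1 N (by omega)).2
      have : X N = v N - 1 := by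
        simp only [hX]
        rw [hVpos N (by omega), hUN]
      rw [this]
      linarith
    have hjltN : j < N := by
      rcases Nat.lt_or_ge j N with h | h
      · exact h
      · exfalso
        have : j = N := by omega
        rw [this] at hXjpos
        linarith
    have hstrict : X (j + 1) < X j := by
      have hj1F : j + 1 ∈ F := Finset.mem_range.mpr (by omega)
      have hnA : j + 1 ∉ A := fun hmem => by
        have := Finset.le_max' A (j + 1) hmem
        omega
      have hlt : ¬ X j0 ≤ X (j + 1) := fun hle =>
        hnA (Finset.mem_filter.mpr ⟨hj1F, hle⟩)
      push_neg at hlt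
      exact lt_of_lt_of_le hlt (Finset.mem_filter.mp hjA).2
    have heq := hXeq j (by omega)
    obtain ⟨hζ1, _⟩ := zeta_mem hd0 hd j
    have hPζ : 0 < Pp p (zeta d j) := Pp_pos hp _
    have hsumle : ∑ r ∈ Finset.Icc 1 (zeta d j - 1),
        (1 - p (r + 1)) * Pp p r * X (j - (q d r - 1))
        ≤ (p 1 - Pp p (zeta d j)) * X j := by
      have htel := coeff_tele (p := p) (zeta d j - 1)
      rw [show zeta d j - 1 + 1 = zeta d j by omega] at htel
      calc ∑ r ∈ Finset.Icc 1 (zeta d j - 1),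
            (1 - p (r + 1)) * Pp p r * X (j - (q d r - 1))
          ≤ ∑ r ∈ Finset.Icc 1 (zeta d j - 1), (1 - p (r + 1)) * Pp p r * X j := by
            apply Finset.sum_le_sum
            intro r hr
            obtain ⟨hr1, hr2⟩ := Finset.mem_Icc.mp hr
            have hcoef : 0 ≤ (1 - p (r + 1)) * Pp p r := by
              have := (hp (r + 1) (by omega)).2
              have := Pp_pos hp r
              nlinarith
            exact mul_le_mul_of_nonneg_left
              (hjmax _ (Finset.mem_range.mpr (by omega))) hcoef
        _ = (p 1 - Pp p (zeta d j)) * X j := by rw [← Finset.sum_mul, htel]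
    have hmul : Pp p (zeta d j) * X (j + 1) < Pp p (zeta d j) * X j :=
      mul_lt_mul_of_pos_left hstrict hPζ
    have hexp : (p 1 - Pp p (zeta d j)) * X j
        = p 1 * X j - Pp p (zeta d j) * X j := by ring
    linarith
  -- conclude
  have hK1 : Kfun d 1 = 1 := by
    apply Kfun_eq hd0 hd
    · have := q_ge_two hd0 hd (le_refl 1); omega
    · right; simp [q_zeroth hd0]
  have hX1 : X 1 = v 1 - Pp p (K + 1) / p 1 := by
    simp only [hX]
    rw [hVpos 1 le_rfl, hUpos 1 le_rfl, hK1, Pp_one]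
  rw [hX1] at hmain
  have hp1 : 0 < p 1 := (hp 1 le_rfl).1
  have := (le_div_iff₀ hp1).mp (by linarith : v 1 ≤ Pp p (K + 1) / p 1)
  linarith

end Aux

theorem stmt0' (d : ℕ → ℕ) (p : ℕ → ℝ)
    (hd0 : d 0 = 1) (hd : ∀ j, 1 ≤ j → 2 ≤ d j)
    (hp : ∀ j, 1 ≤ j → p j ∈ Set.Ioc (0 : ℝ) 1) :
    (∃ v : ℕ → ℝ, (∀ j, 1 ≤ j → 0 < v j ∧ v j ≤ 1) ∧
        (∀ j, 1 ≤ j → v j = ∑' m : ℕ, s d p j (m + 1) * v (m + 1))) ↔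
      ∃ L : ℝ, 0 < L ∧
        Filter.Tendsto (fun n => ∏ j ∈ Finset.Icc 1 n, p j) Filter.atTop (nhds L) := by
  constructor
  · rintro ⟨v, hv1, hv2⟩
    have hbdd : BddBelow (Set.range (Pp p)) := ⟨0, by rintro x ⟨k, rfl⟩; exact (Pp_pos hp k).le⟩
    have hten : Filter.Tendsto (Pp p) Filter.atTop (nhds (⨅ k, Pp p k)) :=
      tendsto_atTop_ciInf (Pp_anti hp) hbdd
    refine ⟨⨅ k, Pp p k, ?_, hten⟩
    have hp1 := hp 1 le_rfl
    have hv1' := hv1 1 le_rfl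
    have hkey : ∀ k, p 1 * v 1 ≤ Pp p k := by
      intro k
      match k with
      | 0 =>
        rw [Pp_zero]
        nlinarith [hp1.1, hp1.2, hv1'.1, hv1'.2]
      | 1 =>
        rw [Pp_one]
        nlinarith [hp1.1, hv1'.1, hv1'.2]
      | (K + 2) =>
        exact key_ineq hd0 hd hp v hv1 hv2 (K := K + 1) (by omega)
    calc (0 : ℝ) < p 1 * v 1 := mul_pos hp1.1 hv1'.1
      _ ≤ ⨅ k, Pp p k := le_ciInf hkey
  · rintro ⟨L, hL, hT⟩
    have hLle : ∀ k, L ≤ Pp p k := fun k =>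
      le_of_tendsto hT (Filter.eventually_atTop.mpr ⟨k, fun n hn => Pp_anti hp hn⟩)
    refine ⟨fun n => L / Pp p (Kfun d n), fun j hj =>
      ⟨div_pos hL (Pp_pos hp _), (div_le_one (Pp_pos hp _)).mpr (hLle _)⟩, fun j hj => ?_⟩
    beta_reduce
    rw [rowsum hd0 hd (fun n => L / Pp p (Kfun d n)) hj]
    beta_reduce
    exact (rowcalc hd0 hd hp L hj).symm


/-- the classical transience criterion: a sequence `v` with
`0 < v_j ≤ 1` and `v_j = Σ_{m≥1} s(j,m) v_m` for all `j ≥ 1` exists iff `Π_{j≥1} p_j > 0`. -/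
theorem stmt0 (d : ℕ → ℕ) (p : ℕ → ℝ)
    (hd0 : d 0 = 1) (hd : ∀ j, 1 ≤ j → 2 ≤ d j)
    (hp : ∀ j, 1 ≤ j → p j ∈ Set.Ioc (0 : ℝ) 1) :
    (∃ v : ℕ → ℝ, (∀ j, 1 ≤ j → 0 < v j ∧ v j ≤ 1) ∧
        (∀ j, 1 ≤ j → v j = ∑' m : ℕ, s d p j (m + 1) * v (m + 1))) ↔
      ∃ L : ℝ, 0 < L ∧
        Filter.Tendsto (fun n => ∏ j ∈ Finset.Icc 1 n, p j) Filter.atTop (nhds L) :=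
  stmt0' d p hd0 hd hp

end AMFC
end
end

section
/- Every z ∈ E satisfies |z − (1 − p_1)| ≤ p_1 (i.e. E is contained in the closed disk of center 1 − p_1 and radius p_1), and moreover for every z ∈ E and every j ≥ 1 one has |f̃_j(z) − (1 − p_{j+1})| ≤ p_{j+1}. -/
open Filter Finset
open scoped ENNReal Topology ZeroAtInfty

noncomputable section

namespace AMFC

/-- Norm of one application of `f`. -/
lemma norm_f_eq (d : ℕ → ℕ) (p : ℕ → ℝ) (j : ℕ) (hpj : 0 < p j) (w : ℂ) :
    ‖f d p j w‖ = (‖w - (1 - (p j : ℂ))‖ / p j) ^ d j := by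
  simp [f, norm_div, norm_pow, Complex.norm_real, abs_of_pos hpj, Real.norm_eq_abs]

/-- One-step growth: if `w` is outside the disk by factor `1 + a`, then
`‖f j w‖ ≥ 1 + 2a`. -/
lemma step_growth (d : ℕ → ℕ) (p : ℕ → ℝ) (j : ℕ) (hd2 : 2 ≤ d j)
    (hpj : 0 < p j) (w : ℂ) (a : ℝ) (ha : 0 ≤ a)
    (h : p j * (1 + a) ≤ ‖w - (1 - (p j : ℂ))‖) :
    1 + 2 * a ≤ ‖f d p j w‖ := by
  have hbase : 1 + a ≤ ‖w - (1 - (p j : ℂ))‖ / p j := by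
    rw [le_div_iff₀ hpj]; linarith [h]
  have h2 : (1 + a) ^ 2 ≤ (‖w - (1 - (p j : ℂ))‖ / p j) ^ d j := by
    calc (1 + a) ^ 2 ≤ (1 + a) ^ d j := pow_le_pow_right₀ (by linarith) hd2
      _ ≤ _ := pow_le_pow_left₀ (by linarith) hbase _
  rw [norm_f_eq d p j hpj]
  nlinarith [h2]

/-- `E ⊆ closed disk D(1 - p_1, p_1)`, and for `z ∈ E` and `j ≥ 1`,
`ftil j z ∈ D(1 - p_{j+1}, p_{j+1})`. -/
theorem stmt1 (d : ℕ → ℕ) (p : ℕ → ℝ)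
    (hd0 : d 0 = 1) (hd : ∀ j, 1 ≤ j → 2 ≤ d j)
    (hp : ∀ j, 1 ≤ j → p j ∈ Set.Ioc (0 : ℝ) 1) :
    ∀ z ∈ E d p, ‖z - (1 - (p 1 : ℂ))‖ ≤ p 1 ∧
      ∀ j, 1 ≤ j → ‖ftil d p j z - (1 - (p (j + 1) : ℂ))‖ ≤ p (j + 1) := by
  intro z hz
  have hpp : ∀ j : ℕ, 0 < p (j + 1) := fun j => (hp (j + 1) (Nat.le_add_left 1 j)).1
  have hp1 : ∀ j : ℕ, p (j + 1) ≤ 1 := fun j => (hp (j + 1) (Nat.le_add_left 1 j)).2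
  have hd2 : ∀ j : ℕ, 2 ≤ d (j + 1) := fun j => hd (j + 1) (Nat.le_add_left 1 j)
  suffices h : ∀ j, ‖ftil d p j z - (1 - (p (j + 1) : ℂ))‖ ≤ p (j + 1) by
    exact ⟨h 0, fun j _ => h j⟩
  by_contra hcon
  push_neg at hcon
  obtain ⟨J, hJ⟩ := hcon
  -- extract a uniform eventual bound from the limsup hypothesis
  rw [E, Set.mem_setOf_eq] at hz
  obtain ⟨C, N, hC⟩ : ∃ C : ℝ, ∃ N : ℕ, ∀ j, N ≤ j → ‖ftil d p j z‖ ≤ C := by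
    set L := Filter.limsup (fun j => (‖ftil d p j z‖₊ : ℝ≥0∞)) Filter.atTop with hL
    have hLlt : L < L + 1 := ENNReal.lt_add_right hz.ne one_ne_zero
    have hev := Filter.eventually_lt_of_limsup_lt hLlt
    rw [Filter.eventually_atTop] at hev
    obtain ⟨N, hN⟩ := hev
    refine ⟨(L + 1).toReal, N, fun j hj => ?_⟩
    have h1 := hN j hj
    have hfin : L + 1 ≠ ⊤ := by
      exact ENNReal.add_ne_top.2 ⟨hz.ne, ENNReal.one_ne_top⟩
    have : ((‖ftil d p j z‖₊ : ℝ≥0∞)).toReal ≤ (L + 1).toReal :=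
      ENNReal.toReal_mono hfin h1.le
    simpa using this
  -- define the escape rate
  set ε : ℝ := ‖ftil d p J z - (1 - (p (J + 1) : ℂ))‖ / p (J + 1) - 1 with hε
  have hεpos : 0 < ε := by
    have := (hpp J)
    rw [hε, sub_pos, lt_div_iff₀ this]
    linarith [hJ]
  -- key induction
  have key : ∀ k : ℕ,
      p (J + k + 1) * (1 + 2 ^ k * ε) ≤ ‖ftil d p (J + k) z - (1 - (p (J + k + 1) : ℂ))‖ := by
    intro k
    induction k with
    | zero =>
      have hpJ := hpp J
      have hx : p (J + 1) * (1 + ε) = ‖ftil d p J z - (1 - (p (J + 1) : ℂ))‖ := by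
        rw [hε]; field_simp; ring
      simpa using hx.le
    | succ k ih =>
      have ha : (0 : ℝ) ≤ 2 ^ k * ε := by positivity
      have hgrow : 1 + 2 * (2 ^ k * ε) ≤ ‖ftil d p (J + k + 1) z‖ := by
        have := step_growth d p (J + k + 1) (hd2 (J + k)) (hpp (J + k)) (ftil d p (J + k) z)
          (2 ^ k * ε) ha ih
        simpa [ftil] using this
      have hnorm1 : ‖(1 - ((p (J + k + 1 + 1) : ℝ) : ℂ))‖ = 1 - p (J + k + 1 + 1) := by
        have h1 : (1 - ((p (J + k + 1 + 1) : ℝ) : ℂ)) = (((1 - p (J + k + 1 + 1) : ℝ)) : ℂ) := by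
          push_cast; ring
        rw [h1, Complex.norm_real, Real.norm_eq_abs, abs_of_nonneg (by linarith [hp1 (J + k + 1)])]
      have htri : ‖ftil d p (J + k + 1) z‖ - ‖(1 - ((p (J + k + 1 + 1) : ℝ) : ℂ))‖ ≤
          ‖ftil d p (J + k + 1) z - (1 - ((p (J + k + 1 + 1) : ℝ) : ℂ))‖ :=
        norm_sub_norm_le _ _
      have hp' := hpp (J + k + 1)
      have hp'' := hp1 (J + k + 1)
      have : p (J + k + 1 + 1) * (1 + 2 ^ (k + 1) * ε) ≤
          ‖ftil d p (J + k + 1) z - (1 - ((p (J + k + 1 + 1) : ℝ) : ℂ))‖ := by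
        rw [hnorm1] at htri
        have h2 : (2 : ℝ) ^ (k + 1) * ε = 2 * (2 ^ k * ε) := by ring
        nlinarith [htri, hgrow, ha, hp', hp'']
      simpa [Nat.add_assoc] using this
  -- the iterates blow up, contradiction with the bound C
  obtain ⟨M, hM⟩ := pow_unbounded_of_one_lt (C / ε) (one_lt_two (α := ℝ))
  set k := max M N with hk
  have h2k : (2 : ℝ) ^ M ≤ 2 ^ k := pow_le_pow_right₀ one_le_two (le_max_left _ _)
  have hCk : C < 1 + 2 * (2 ^ k * ε) := by
    have : C / ε < 2 ^ k := lt_of_lt_of_le hM h2k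
    rw [div_lt_iff₀ hεpos] at this
    have ht : (0 : ℝ) < 2 ^ k * ε := by positivity
    linarith
  have hgrow : 1 + 2 * (2 ^ k * ε) ≤ ‖ftil d p (J + k + 1) z‖ := by
    have := step_growth d p (J + k + 1) (hd2 (J + k)) (hpp (J + k)) (ftil d p (J + k) z)
      (2 ^ k * ε) (by positivity) (key k)
    simpa [ftil] using this
  have hbound : ‖ftil d p (J + k + 1) z‖ ≤ C := hC _ (by omega)
  linarith


end AMFC
end
end
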